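/- Let γ be a real symmetric L×L matrix with γ² = γ, let 1 ≤ ℓ < L, let Π_frag be the orthogonal projector onto span(e₁,…,e_ℓ) (the first ℓ standard basis vectors of ℝ^L), and let m be an integer with m ≥ ℓ and ℓ + m ≤ L. Then full disentanglement can be achieved: there exists a real symmetric L×L matrix Π with Π² = Π, Tr(Π) = ℓ + m, Π Π_frag = Π_frag, and Π γ (I_L − Π) = 0. -/

import Mathlib

open Matrix Filter Topology

noncomputable section

open Module Submodule

theorem aux_exists_interm {K M : Type*} [Field K] [AddCommGroup M] [Module K M]
    [FiniteDimensional K M]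
    (W : Submodule K M) (n : ℕ) (h1 : finrank K W ≤ n) (h2 : n ≤ finrank K M) :
    ∃ V : Submodule K M, W ≤ V ∧ finrank K V = n := by
  induction n with
  | zero => exact ⟨W, le_refl _, le_antisymm h1 (Nat.zero_le _)⟩
  | succ n ih =>
    rcases Nat.lt_or_ge (finrank K W) (n+1) with h | h
    · obtain ⟨V, hWV, hV⟩ := ih (Nat.lt_succ_iff.mp h) (le_of_lt h2)
      have hVt : V ≠ ⊤ := by
        intro ht; rw [ht, finrank_top] at hV; omega
      obtain ⟨x, hx⟩ : ∃ x, x ∉ V := by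
        by_contra hc; push_neg at hc
        exact hVt (Submodule.eq_top_iff'.mpr hc)
      refine ⟨(K ∙ x) ⊔ V, le_trans hWV le_sup_right, ?_⟩
      have hdisj : (K ∙ x) ⊓ V = ⊥ := by
        rw [eq_bot_iff]
        intro y ⟨hy1, hy2⟩
        obtain ⟨c, rfl⟩ := Submodule.mem_span_singleton.mp hy1
        rcases eq_or_ne c 0 with rfl | hc
        · simp
        · exact absurd (by simpa [smul_smul, inv_mul_cancel₀ hc] using V.smul_mem c⁻¹ hy2) hx
      have hx0 : x ≠ 0 := fun h0 => hx (h0 ▸ V.zero_mem)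
      have := Submodule.finrank_sup_add_finrank_inf_eq (K ∙ x) V
      rw [hdisj, finrank_bot, finrank_span_singleton hx0] at this
      omega
    · exact ⟨W, le_refl _, le_antisymm h1 h⟩

theorem aux_exists_interm_le {K M : Type*} [Field K] [AddCommGroup M] [Module K M]
    [FiniteDimensional K M]
    {W E' : Submodule K M} (hWE : W ≤ E') (n : ℕ) (h1 : finrank K W ≤ n)
    (h2 : n ≤ finrank K E') :
    ∃ V : Submodule K M, W ≤ V ∧ V ≤ E' ∧ finrank K V = n := by
  set Wi := W.comap E'.subtype with hWi
  have hfr : finrank K Wi = finrank K W := (Submodule.comapSubtypeEquivOfLe hWE).finrank_eq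
  obtain ⟨V', hWV', hV'⟩ := aux_exists_interm Wi n (hfr ▸ h1) (by simpa using h2)
  refine ⟨V'.map E'.subtype, ?_, Submodule.map_subtype_le _ _, ?_⟩
  · have hW : Wi.map E'.subtype = W := by
      rw [hWi, Submodule.map_comap_subtype, inf_eq_right.mpr hWE]
    exact hW ▸ Submodule.map_mono hWV'
  · rw [Submodule.finrank_map_subtype_eq]; exact hV'

theorem aux_finrank_span_range_le {K M ι : Type*} [Field K] [AddCommGroup M] [Module K M]
    [Fintype ι] (f : ι → M) :
    finrank K (span K (Set.range f)) ≤ Fintype.card ι := by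
  classical
  exact (finrank_span_le_card _).trans
    (by rw [Set.toFinset_card]; exact Fintype.card_range_le f)

theorem aux_sum_mulVec {ι n' m' : Type*} [Fintype n'] (s : Finset ι)
    (M : ι → Matrix m' n' ℝ) (x : n' → ℝ) :
    (∑ j ∈ s, M j) *ᵥ x = ∑ j ∈ s, (M j) *ᵥ x := by
  ext i
  simp only [mulVec, dotProduct, Finset.sum_apply, Matrix.sum_apply, Finset.sum_mul]
  rw [Finset.sum_comm]

theorem aux_vmv_mulVec {n : Type*} [Fintype n] (a b x : n → ℝ) :
    (vecMulVec a b) *ᵥ x = (b ⬝ᵥ x) • a := by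
  ext i
  simp [mulVec, vecMulVec_apply, dotProduct, Finset.mul_sum, mul_comm, mul_assoc, mul_left_comm]

theorem aux_vmv_mul {n : Type*} [Fintype n] (a b c d : n → ℝ) :
    (vecMulVec a b) * (vecMulVec c d) = (b ⬝ᵥ c) • vecMulVec a d := by
  ext i j
  simp [Matrix.mul_apply, vecMulVec_apply, dotProduct, Finset.mul_sum, Finset.sum_mul]
  ring_nf
  congr 1; ext k; ring

theorem aux_vmv_trace {n : Type*} [Fintype n] (a b : n → ℝ) :
    (vecMulVec a b).trace = a ⬝ᵥ b := by
  simp [Matrix.trace, Matrix.diag, vecMulVec_apply, dotProduct]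

theorem aux_sum_dot {ι n' : Type*} [Fintype n'] (s : Finset ι) (f : ι → n' → ℝ) (u : n' → ℝ) :
    (∑ j ∈ s, f j) ⬝ᵥ u = ∑ j ∈ s, f j ⬝ᵥ u := by
  simp only [dotProduct, Finset.sum_apply, Finset.sum_mul]
  rw [Finset.sum_comm]

theorem aux_dot_sum {ι n' : Type*} [Fintype n'] (s : Finset ι) (u : n' → ℝ) (f : ι → n' → ℝ) :
    u ⬝ᵥ (∑ j ∈ s, f j) = ∑ j ∈ s, u ⬝ᵥ f j := by
  simp only [dotProduct, Finset.sum_apply, Finset.mul_sum]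
  rw [Finset.sum_comm]

theorem aux_inner_dot {L : ℕ} (x y : EuclideanSpace ℝ (Fin L)) :
    (inner ℝ x y : ℝ) = (WithLp.equiv 2 _ x) ⬝ᵥ (WithLp.equiv 2 _ y) := by
  simp [PiLp.inner_apply, dotProduct, RCLike.inner_apply, mul_comm]

/-- The orthogonal projector onto `span(e₁,…,e_ℓ)` in `ℝ^L`. -/
def fragProj (L ℓ : ℕ) : Matrix (Fin L) (Fin L) ℝ :=
  Matrix.diagonal (fun i : Fin L => if (i : ℕ) < ℓ then (1 : ℝ) else 0)

/-- if `γ² = γ` is a real symmetric `L×L` matrix, `1 ≤ ℓ < L`, `m ≥ ℓ`,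
and `ℓ + m ≤ L`, then full disentanglement can be achieved: there exists an orthogonal
projector `Π` of rank `ℓ + m` with `Π Π_frag = Π_frag` and `Π γ (I − Π) = 0`. -/
theorem stmt_12 {L ℓ m : ℕ} (hℓ1 : 1 ≤ ℓ) (hℓL : ℓ < L) (hmℓ : ℓ ≤ m) (hLm : ℓ + m ≤ L)
    (γ : Matrix (Fin L) (Fin L) ℝ) (hγs : γ.IsSymm) (hγ : γ * γ = γ) :
    ∃ Pr : Matrix (Fin L) (Fin L) ℝ,
      Pr.IsSymm ∧ Pr * Pr = Pr ∧ Pr.trace = ((ℓ + m : ℕ) : ℝ) ∧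
      Pr * fragProj L ℓ = fragProj L ℓ ∧ Pr * γ * (1 - Pr) = 0 := by
  classical
  set T : EuclideanSpace ℝ (Fin L) →ₗ[ℝ] EuclideanSpace ℝ (Fin L) :=
    Matrix.toEuclideanLin γ with hTdef
  have hT : ∀ x, T (T x) = T x := fun x => by
    simp only [hTdef, Matrix.toEuclideanLin_apply, Equiv.apply_symm_apply,
      Matrix.mulVec_mulVec, hγ]
  -- fragment basis vectors
  set e : Fin ℓ → EuclideanSpace ℝ (Fin L) :=
    fun i => EuclideanSpace.single ⟨(i : ℕ), lt_of_lt_of_le i.2 (le_of_lt hℓL)⟩ 1 with hedef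
  set W₁ : Submodule ℝ (EuclideanSpace ℝ (Fin L)) :=
    span ℝ (Set.range fun i => T (e i)) with hW₁def
  set W₀ : Submodule ℝ (EuclideanSpace ℝ (Fin L)) :=
    span ℝ (Set.range fun i => e i - T (e i)) with hW₀def
  have hW₁r : W₁ ≤ LinearMap.range T := by
    rw [hW₁def, span_le]; rintro _ ⟨i, rfl⟩; exact ⟨e i, rfl⟩
  have hW₀k : W₀ ≤ LinearMap.ker T := by
    rw [hW₀def, span_le]; rintro _ ⟨i, rfl⟩
    simp [LinearMap.mem_ker, map_sub, hT]
  have hw1 : finrank ℝ W₁ ≤ ℓ := by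
    simpa using aux_finrank_span_range_le (K := ℝ) (fun i : Fin ℓ => T (e i))
  have hw0 : finrank ℝ W₀ ≤ ℓ := by
    simpa using aux_finrank_span_range_le (K := ℝ) (fun i : Fin ℓ => e i - T (e i))
  have hrank : finrank ℝ (LinearMap.range T) + finrank ℝ (LinearMap.ker T) = L := by
    rw [LinearMap.finrank_range_add_finrank_ker]
    simp [finrank_euclideanSpace]
  have hdisj : LinearMap.range T ⊓ LinearMap.ker T = ⊥ := by
    rw [eq_bot_iff]
    intro x hx
    rw [Submodule.mem_inf] at hx
    obtain ⟨⟨y, rfl⟩, hk0⟩ := hx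
    rw [LinearMap.mem_ker] at hk0
    rw [Submodule.mem_bot, ← hT y, hk0]
  -- dimensions
  set r1 := finrank ℝ (LinearMap.range T) with hr1
  set r0 := finrank ℝ (LinearMap.ker T) with hr0
  have hw1r : finrank ℝ W₁ ≤ r1 := Submodule.finrank_mono hW₁r
  have hw0r : finrank ℝ W₀ ≤ r0 := Submodule.finrank_mono hW₀k
  set a' := min r1 (ℓ + m - finrank ℝ W₀) with ha'
  have ha1 : a' ≤ r1 := min_le_left _ _
  have ha2 : a' ≤ ℓ + m - finrank ℝ W₀ := min_le_right _ _
  have ha3 : a' = r1 ∨ a' = ℓ + m - finrank ℝ W₀ := min_choice _ _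
  obtain ⟨V₁, hWV₁, hV₁r, hV₁fr⟩ :=
    aux_exists_interm_le hW₁r a' (by omega) (by omega)
  obtain ⟨V₀, hWV₀, hV₀k, hV₀fr⟩ :=
    aux_exists_interm_le hW₀k (ℓ + m - a') (by omega) (by omega)
  set U := V₁ ⊔ V₀ with hUdef
  have hinf : V₁ ⊓ V₀ = ⊥ :=
    eq_bot_iff.mpr (le_trans (inf_le_inf hV₁r hV₀k) (le_of_eq hdisj))
  have hUfin : finrank ℝ U = ℓ + m := by
    have h := Submodule.finrank_sup_add_finrank_inf_eq V₁ V₀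
    rw [hinf, finrank_bot] at h
    rw [hUdef]
    omega
  have hUinv : ∀ u ∈ U, T u ∈ U := by
    intro u hu
    obtain ⟨x, hx, y, hy, rfl⟩ := Submodule.mem_sup.mp hu
    obtain ⟨z, hz⟩ := hV₁r hx
    have hTx : T x = x := by rw [← hz, hT]
    have hTy' : T y = 0 := by
      have := hV₀k hy; rwa [LinearMap.mem_ker] at this
    rw [map_add, hTx, hTy']
    simpa using Submodule.mem_sup_left hx
  have hfragU : ∀ i : Fin ℓ, e i ∈ U := by
    intro i
    have h1 : T (e i) ∈ V₁ := hWV₁ (subset_span ⟨i, rfl⟩)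
    have h2 : e i - T (e i) ∈ V₀ := hWV₀ (subset_span ⟨i, rfl⟩)
    have := add_mem (Submodule.mem_sup_left (S := V₁) (T := V₀) h1)
      (Submodule.mem_sup_right (S := V₁) (T := V₀) h2)
    simpa [hUdef] using this
  -- orthonormal basis of U
  set k := finrank ℝ U with hk
  set b := stdOrthonormalBasis ℝ U with hb
  set w : Fin k → (Fin L → ℝ) := fun j => WithLp.equiv 2 _ ((b j : EuclideanSpace ℝ (Fin L)))
    with hw
  have hortho : ∀ i j, w i ⬝ᵥ w j = if i = j then 1 else 0 := by
    intro i j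
    have h := orthonormal_iff_ite.mp b.orthonormal i j
    rw [Submodule.coe_inner, aux_inner_dot] at h
    simpa [hw] using h
  set Pr : Matrix (Fin L) (Fin L) ℝ := ∑ j : Fin k, vecMulVec (w j) (w j) with hPr
  have hPrmulVec : ∀ x : Fin L → ℝ, Pr *ᵥ x = ∑ j : Fin k, (w j ⬝ᵥ x) • w j := by
    intro x
    rw [hPr]
    ext i
    rw [aux_sum_mulVec]
    simp [aux_vmv_mulVec]
  -- Pr fixes U
  have hfix : ∀ u : EuclideanSpace ℝ (Fin L), u ∈ U →
      Pr *ᵥ (WithLp.equiv 2 _ u) = WithLp.equiv 2 _ u := by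
    intro u hu
    have hrepr := b.sum_repr ⟨u, hu⟩
    have hco : ∑ j : Fin k, b.repr ⟨u, hu⟩ j • ((b j : EuclideanSpace ℝ (Fin L))) = u := by
      have := congrArg (Subtype.val) hrepr
      simpa using this
    have hcoef : ∀ j, b.repr ⟨u, hu⟩ j = w j ⬝ᵥ (WithLp.equiv 2 _ u) := by
      intro j
      rw [b.repr_apply_apply, Submodule.coe_inner, aux_inner_dot]
    rw [hPrmulVec]
    calc ∑ j : Fin k, (w j ⬝ᵥ WithLp.equiv 2 _ u) • w j
        = ∑ j : Fin k, b.repr ⟨u, hu⟩ j • w j := by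
          refine Finset.sum_congr rfl fun j _ => ?_; rw [hcoef]
      _ = WithLp.equiv 2 _ u := by
          conv_rhs => rw [← hco]
          simp [hw]
  have hwU : ∀ j, ((b j : EuclideanSpace ℝ (Fin L))) ∈ U := fun j => SetLike.coe_mem _
  -- symmetric
  have hsymm : Pr.IsSymm := by
    rw [Matrix.IsSymm, hPr]
    ext i j
    simp [Matrix.sum_apply, vecMulVec_apply, mul_comm]
  -- idempotent
  have hidem : Pr * Pr = Pr := by
    rw [hPr, Finset.sum_mul_sum]
    have : ∀ j ∈ Finset.univ, ∀ i ∈ Finset.univ,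
        vecMulVec (w j) (w j) * vecMulVec (w i) (w i)
          = if j = i then vecMulVec (w j) (w i) else 0 := by
      intro j _ i _
      rw [aux_vmv_mul, hortho]
      split <;> simp
    calc ∑ j : Fin k, ∑ i : Fin k, vecMulVec (w j) (w j) * vecMulVec (w i) (w i)
        = ∑ j : Fin k, ∑ i : Fin k, if j = i then vecMulVec (w j) (w i) else 0 := by
          refine Finset.sum_congr rfl fun j hj => Finset.sum_congr rfl fun i hi => ?_
          exact this j hj i hi
      _ = ∑ j : Fin k, vecMulVec (w j) (w j) := by
          refine Finset.sum_congr rfl fun j _ => ?_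
          simp
  -- trace
  have htrace : Pr.trace = ((ℓ + m : ℕ) : ℝ) := by
    rw [hPr, Matrix.trace_sum]
    have : ∀ j : Fin k, (vecMulVec (w j) (w j)).trace = 1 := by
      intro j; rw [aux_vmv_trace, hortho]; simp
    rw [Finset.sum_congr rfl fun j _ => this j]
    rw [Finset.sum_const, Finset.card_univ, Fintype.card_fin]
    rw [hUfin]
    simp
  -- fixes fragment
  have hfrag : Pr * fragProj L ℓ = fragProj L ℓ := by
    ext i j
    rw [fragProj, Matrix.mul_diagonal, Matrix.diagonal_apply]
    by_cases hj : (j : ℕ) < ℓ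
    · have hcol := hfix (e ⟨(j : ℕ), hj⟩) (hfragU _)
      have hee : (WithLp.equiv 2 (Fin L → ℝ)) (e ⟨(j : ℕ), hj⟩) = Pi.single j 1 := by
        funext i'
        rw [hedef]
        simp [EuclideanSpace.single_apply, Pi.single_apply, Fin.ext_iff]
      rw [hee] at hcol
      have h2 := congrFun hcol i
      simp only [Matrix.mulVec_single, mul_one, MulOpposite.op_one, one_smul, Matrix.col_apply] at h2
      simp only [hj, if_true, mul_one, h2, Pi.single_apply]
      by_cases hij : i = j
      · subst hij; simp [hj]
      · simp [hij, Ne.symm hij]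
    · rw [if_neg hj, mul_zero]
      by_cases hij : i = j
      · subst hij; simp [hj]
      · simp [hij]
  -- disentanglement
  have hγdot : ∀ v u : Fin L → ℝ, (γ *ᵥ v) ⬝ᵥ u = v ⬝ᵥ (γ *ᵥ u) := by
    intro v u
    rw [Matrix.dotProduct_mulVec, ← Matrix.mulVec_transpose, hγs]
  have hperp : ∀ (x : Fin L → ℝ), ∀ u ∈ U,
      (x - Pr *ᵥ x) ⬝ᵥ (WithLp.equiv 2 _ u) = 0 := by
    intro x u hu
    rw [sub_dotProduct, hPrmulVec]
    have h1 : (∑ j : Fin k, (w j ⬝ᵥ x) • w j) ⬝ᵥ (WithLp.equiv 2 _ u)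
        = ∑ j : Fin k, (w j ⬝ᵥ x) * (w j ⬝ᵥ WithLp.equiv 2 _ u) := by
      rw [aux_sum_dot]
      refine Finset.sum_congr rfl fun j _ => ?_
      rw [smul_dotProduct]
      simp [smul_eq_mul]
    have h2 : x ⬝ᵥ (WithLp.equiv 2 _ u) = ∑ j : Fin k, (w j ⬝ᵥ x) * (w j ⬝ᵥ WithLp.equiv 2 _ u) := by
      conv_lhs => rw [← hfix u hu, hPrmulVec]
      rw [aux_dot_sum]
      refine Finset.sum_congr rfl fun j _ => ?_
      rw [dotProduct_smul]
      simp [smul_eq_mul, dotProduct_comm, mul_comm]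
    rw [h1, h2, sub_self]
  have hTmat : ∀ u : EuclideanSpace ℝ (Fin L),
      γ *ᵥ (WithLp.equiv 2 _ u) = WithLp.equiv 2 _ (T u) := by
    intro u
    rw [hTdef, Matrix.toEuclideanLin_apply]; rfl
  have hzero : Pr * γ * (1 - Pr) = 0 := by
    have hz : ∀ x : Fin L → ℝ, (Pr * γ * (1 - Pr)) *ᵥ x = 0 := by
      intro x
      rw [← Matrix.mulVec_mulVec, ← Matrix.mulVec_mulVec, Matrix.sub_mulVec, Matrix.one_mulVec]
      set z : Fin L → ℝ := x - Pr *ᵥ x with hz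
      rw [hPrmulVec]
      have hco : ∀ j : Fin k, w j ⬝ᵥ (γ *ᵥ z) = 0 := by
        intro j
        rw [← hγdot]
        rw [hw]
        rw [hTmat (b j : EuclideanSpace ℝ (Fin L))]
        rw [dotProduct_comm]
        exact hperp x _ (hUinv _ (hwU j))
      simp only [hco, zero_smul, Finset.sum_const_zero]
    ext i j
    have := congrFun (hz (Pi.single j 1)) i
    rw [Matrix.mulVec_single] at this
    simpa using this
  exact ⟨Pr, hsymm, hidem, htrace, hfrag, hzero⟩

end
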